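/- arXiv:1605.01039 — 2 statements merged into one kernel-verified Lean document; each statement's English description precedes it below -/
import Mathlib

section
/- Let T be a positively edge-weighted tree with base nodes v_1 and v_2, and square root embeddings Ψ_{v_1}, Ψ_{v_2} : V(T) → ℝ^{m-1} (with the same fixed ordering of edges). Then there exist a linear map R : ℝ^{m-1} → ℝ^{m-1}, given by negating the coordinates corresponding to edges on the path from v_1 to v_2 and fixing all other coordinates, and a vector a ∈ ℝ^{m-1}, such that Ψ_{v_1}(u) = R(Ψ_{v_2}(u)) + a for all nodes u of T. In particular, Ψ_{v_1} and Ψ_{v_2} differ by a Euclidean isometry. -/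
open SimpleGraph

/-- The unique path between two vertices of a tree, as a walk. -/
noncomputable def treePath {V : Type*} (G : SimpleGraph V) (hG : G.IsTree) (a b : V) :
    G.Walk a b :=
  (hG.existsUnique_path a b).choose

/-- The square root embedding with base node `v`: the coordinate of `Ψ_v u` at edge `e`
is `√(w e)` if `e` lies on the path from `v` to `u`, and `0` otherwise. -/
noncomputable def sqrtEmbed {V : Type*} [DecidableEq V] (G : SimpleGraph V) (hG : G.IsTree)
    [Fintype G.edgeSet] (w : Sym2 V → ℝ) (v u : V) : EuclideanSpace ℝ G.edgeSet :=
  WithLp.toLp 2 fun e => if (e : Sym2 V) ∈ (treePath G hG v u).edges then Real.sqrt (w e) else 0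

/-- The tree metric: sum of the weights of the edges on the unique path. -/
noncomputable def treeDist {V : Type*} (G : SimpleGraph V) (hG : G.IsTree)
    (w : Sym2 V → ℝ) (a b : V) : ℝ :=
  ((treePath G hG a b).edges.map w).sum

lemma treePath_isPath {V : Type*} (G : SimpleGraph V) (hG : G.IsTree) (a b : V) :
    (treePath G hG a b).IsPath :=
  (hG.existsUnique_path a b).choose_spec.1

lemma treePath_eq {V : Type*} (G : SimpleGraph V) (hG : G.IsTree) {a b : V}
    {p : G.Walk a b} (hp : p.IsPath) : treePath G hG a b = p :=
  ((hG.existsUnique_path a b).choose_spec.2 p hp).symm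

lemma concat_isPath {V : Type*} {G : SimpleGraph V} {a x y : V} {p : G.Walk a x}
    (hp : p.IsPath) (h : G.Adj x y) (hy : y ∉ p.support) : (p.concat h).IsPath := by
  have : (p.concat h) = (Walk.cons h.symm p.reverse).reverse := by
    rw [Walk.reverse_cons, Walk.reverse_reverse, Walk.concat_eq_append]
  rw [this]
  exact (hp.reverse.cons (by simpa using hy)).reverse

/-- For adjacent `x y`, the edge lists of the tree paths from `r` to `x` and `y`
differ by appending the edge `s(x,y)` on one side or the other. -/
lemma treePath_edges_adj {V : Type*} [DecidableEq V] (G : SimpleGraph V) (hG : G.IsTree)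
    {x y : V} (h : G.Adj x y) (r : V) :
    (treePath G hG r y).edges = (treePath G hG r x).edges ++ [s(x, y)] ∨
    (treePath G hG r x).edges = (treePath G hG r y).edges ++ [s(x, y)] := by
  set p := treePath G hG r x with hp_def
  have hp : p.IsPath := treePath_isPath G hG r x
  by_cases hy : y ∈ p.support
  · right
    have hq : (p.takeUntil y hy).IsPath := hp.takeUntil hy
    have hd : (p.dropUntil y hy).IsPath := hp.dropUntil hy
    have hsingle : (p.dropUntil y hy) = Walk.cons h.symm Walk.nil := by
      have h1 : treePath G hG y x = p.dropUntil y hy := treePath_eq G hG hd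
      have h2 : treePath G hG y x = Walk.cons h.symm Walk.nil :=
        treePath_eq G hG (SimpleGraph.Path.singleton h.symm).2
      rw [← h1, h2]
    have hspec := p.take_spec hy
    have hqy : treePath G hG r y = p.takeUntil y hy := treePath_eq G hG hq
    rw [hqy]
    conv_lhs => rw [← hspec]
    rw [hsingle, Walk.edges_append]
    simp [Sym2.eq_swap]
  · left
    have : treePath G hG r y = p.concat h := treePath_eq G hG (concat_isPath hp h hy)
    rw [this, Walk.edges_concat]
    simp
/-- Key parity lemma: walking a path `p` from `a` to `b` flips membership of `e` in
the tree path from `u` exactly when `e` lies on `p`. -/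
lemma treePath_mem_iff_of_isPath {V : Type*} [DecidableEq V] (G : SimpleGraph V)
    (hG : G.IsTree) (u : V) : ∀ {a b : V} (p : G.Walk a b), p.IsPath → ∀ e : Sym2 V,
    ((e ∈ (treePath G hG u a).edges ↔ e ∈ (treePath G hG u b).edges) ↔ e ∉ p.edges) := by
  intro a b p
  induction p with
  | nil => intro _ e; simp
  | cons h q ih =>
    rename_i a c b
    intro hp e
    have hq : q.IsPath := hp.of_cons
    have ha : a ∉ q.support := by
      rw [Walk.cons_isPath_iff] at hp; exact hp.2
    have hE : s(a, c) ∉ q.edges := fun hmem => ha (q.fst_mem_support_of_mem_edges hmem)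
    have IH := ih hq e
    have hadj := treePath_edges_adj G hG h u
    rw [Walk.edges_cons]
    by_cases he : e = s(a, c)
    · subst he
      have hne : ¬ (s(a,c) ∈ (treePath G hG u a).edges ↔ s(a,c) ∈ (treePath G hG u c).edges) := by
        rcases hadj with hcase | hcase
        · have hmem : s(a,c) ∈ (treePath G hG u c).edges := by rw [hcase]; simp
          have hnodup : (treePath G hG u c).edges.Nodup := (treePath_isPath G hG u c).edges_nodup
          rw [hcase] at hnodup
          have : s(a,c) ∉ (treePath G hG u a).edges := by
            intro hc
            exact (List.disjoint_of_nodup_append hnodup) hc (by simp)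
          tauto
        · have hmem : s(a,c) ∈ (treePath G hG u a).edges := by rw [hcase]; simp
          have hnodup : (treePath G hG u a).edges.Nodup := (treePath_isPath G hG u a).edges_nodup
          rw [hcase] at hnodup
          have : s(a,c) ∉ (treePath G hG u c).edges := by
            intro hc
            exact (List.disjoint_of_nodup_append hnodup) hc (by simp)
          tauto
      have hcb : s(a,c) ∈ (treePath G hG u c).edges ↔ s(a,c) ∈ (treePath G hG u b).edges :=
        IH.2 hE
      simp only [List.mem_cons]
      tauto
    · have hac : e ∈ (treePath G hG u a).edges ↔ e ∈ (treePath G hG u c).edges := by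
        rcases hadj with hcase | hcase <;> rw [hcase] <;> simp [he]
      simp only [List.mem_cons]
      rw [hac, IH]
      tauto

lemma treePath_edges_comm {V : Type*} [DecidableEq V] (G : SimpleGraph V) (hG : G.IsTree)
    (a b : V) (e : Sym2 V) :
    e ∈ (treePath G hG a b).edges ↔ e ∈ (treePath G hG b a).edges := by
  have : treePath G hG b a = (treePath G hG a b).reverse :=
    treePath_eq G hG (treePath_isPath G hG a b).reverse
  rw [this, Walk.edges_reverse, List.mem_reverse]

/-- The base change fact at the level of edge membership. -/
lemma treePath_base_change {V : Type*} [DecidableEq V] (G : SimpleGraph V) (hG : G.IsTree)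
    (v₁ v₂ u : V) (e : Sym2 V) :
    (e ∈ (treePath G hG v₁ u).edges ↔ e ∈ (treePath G hG v₂ u).edges) ↔
      e ∉ (treePath G hG v₁ v₂).edges := by
  have := treePath_mem_iff_of_isPath G hG u (treePath G hG v₁ v₂)
    (treePath_isPath G hG v₁ v₂) e
  rw [treePath_edges_comm G hG v₁ u, treePath_edges_comm G hG v₂ u]
  exact this

/-- changing the base node from `v₂` to `v₁` changes the square root embedding
by the linear reflection `R` negating exactly the coordinates of edges on the path from `v₁`
to `v₂`, followed by a translation; in particular the two embeddings differ by a Euclidean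
isometry. -/
theorem sqrtEmbed_base_change {V : Type*} [DecidableEq V] (G : SimpleGraph V) (hG : G.IsTree)
    [Fintype G.edgeSet] (w : Sym2 V → ℝ) (hw : ∀ e ∈ G.edgeSet, 0 < w e) (v₁ v₂ : V) :
    ∃ (R : EuclideanSpace ℝ G.edgeSet →ₗ[ℝ] EuclideanSpace ℝ G.edgeSet)
      (a : EuclideanSpace ℝ G.edgeSet),
      (∀ (x : EuclideanSpace ℝ G.edgeSet) (e : G.edgeSet),
        R x e = if (e : Sym2 V) ∈ (treePath G hG v₁ v₂).edges then -(x e) else x e) ∧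
      (∀ u : V, sqrtEmbed G hG w v₁ u = R (sqrtEmbed G hG w v₂ u) + a) ∧
      (∀ u u' : V, dist (sqrtEmbed G hG w v₁ u) (sqrtEmbed G hG w v₁ u') =
        dist (sqrtEmbed G hG w v₂ u) (sqrtEmbed G hG w v₂ u')) := by
  classical
  set R : EuclideanSpace ℝ G.edgeSet →ₗ[ℝ] EuclideanSpace ℝ G.edgeSet :=
    { toFun := fun x => WithLp.toLp 2 fun e =>
        if (e : Sym2 V) ∈ (treePath G hG v₁ v₂).edges then -(x e) else x e
      map_add' := by
        intro x y
        ext e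
        by_cases h : (e : Sym2 V) ∈ (treePath G hG v₁ v₂).edges <;>
          simp [h, PiLp.add_apply] <;> ring
      map_smul' := by
        intro c x
        ext e
        by_cases h : (e : Sym2 V) ∈ (treePath G hG v₁ v₂).edges <;>
          simp [h, PiLp.smul_apply, smul_eq_mul] } with hR
  have hRapp : ∀ (x : EuclideanSpace ℝ G.edgeSet) (e : G.edgeSet),
      R x e = if (e : Sym2 V) ∈ (treePath G hG v₁ v₂).edges then -(x e) else x e :=
    fun x e => rfl
  have haff : ∀ u : V,
      sqrtEmbed G hG w v₁ u = R (sqrtEmbed G hG w v₂ u) + sqrtEmbed G hG w v₁ v₂ := by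
    intro u
    ext e
    have hkey := treePath_base_change G hG v₁ v₂ u (e : Sym2 V)
    show sqrtEmbed G hG w v₁ u e = R (sqrtEmbed G hG w v₂ u) e + sqrtEmbed G hG w v₁ v₂ e
    rw [hRapp]
    simp only [sqrtEmbed]
    by_cases h12 : (e : Sym2 V) ∈ (treePath G hG v₁ v₂).edges
    · by_cases h2 : (e : Sym2 V) ∈ (treePath G hG v₂ u).edges
      · have h1 : (e : Sym2 V) ∉ (treePath G hG v₁ u).edges := by tauto
        simp [h12, h2, h1]
      · have h1 : (e : Sym2 V) ∈ (treePath G hG v₁ u).edges := by tauto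
        simp [h12, h2, h1]
    · have h12' : ((e : Sym2 V) ∈ (treePath G hG v₁ u).edges ↔
          (e : Sym2 V) ∈ (treePath G hG v₂ u).edges) := hkey.2 h12
      by_cases h2 : (e : Sym2 V) ∈ (treePath G hG v₂ u).edges
      · simp [h12, h2, h12'.2 h2]
      · have h1 : (e : Sym2 V) ∉ (treePath G hG v₁ u).edges := fun hc => h2 (h12'.1 hc)
        simp [h12, h2, h1]
  refine ⟨R, sqrtEmbed G hG w v₁ v₂, hRapp, haff, ?_⟩
  · intro u u'
    have hnorm : ∀ x : EuclideanSpace ℝ G.edgeSet, ‖R x‖ = ‖x‖ := by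
      intro x
      rw [EuclideanSpace.norm_eq, EuclideanSpace.norm_eq]
      congr 1
      refine Finset.sum_congr rfl fun e _ => ?_
      rw [hRapp]
      by_cases h : (e : Sym2 V) ∈ (treePath G hG v₁ v₂).edges <;> simp [h]
    rw [haff u, haff u', dist_add_right, dist_eq_norm, dist_eq_norm, ← map_sub, hnorm]
end

section
/- In fact (Ψ(v_1) - Ψ(w)) · (Ψ(v_2) - Ψ(w)) equals the total weight of the edges common to the path from w to v_1 and the path from w to v_2, i.e., the tree distance from w to the meeting point (median) of v_1, v_2, w. -/
open SimpleGraph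

set_option maxHeartbeats 1000000

lemma reach_of_avoid {V : Type*} {G : SimpleGraph V} (e : Sym2 V) {x z : V} (p : G.Walk x z)
    (h : e ∉ p.edges) : (G \ fromEdgeSet {e}).Reachable x z :=
  ⟨p.transfer _ (fun f hf => by
    simp only [edgeSet_sdiff, edgeSet_fromEdgeSet, edgeSet_sdiff_sdiff_isDiag, Set.mem_diff,
      Set.mem_singleton_iff]
    exact ⟨p.edges_subset_edgeSet hf, fun h' => h (h' ▸ hf)⟩)⟩

lemma crossing {V : Type*} {G : SimpleGraph V} (hA : G.IsAcyclic) {a b : V} (hab : G.Adj a b)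
    {x z : V} (p : G.Walk x z) (hp : p.IsPath) :
    s(a,b) ∈ p.edges ↔
      ¬((G \ fromEdgeSet {s(a,b)}).Reachable a x ↔ (G \ fromEdgeSet {s(a,b)}).Reachable a z) := by
  set G' := G \ fromEdgeSet {s(a,b)} with hG'
  have hnr : ¬ G'.Reachable a b := isBridge_iff.mp (isAcyclic_iff_forall_adj_isBridge.mp hA hab)
  constructor
  · induction p with
    | nil => intro hmem; simp at hmem
    | @cons x y z hadj q ih =>
      intro hmem
      rw [Walk.edges_cons, List.mem_cons] at hmem
      have hq : q.IsPath := hp.of_cons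
      rcases hmem with heq | hmem
      · have hqe : s(a,b) ∉ q.edges := by
          have := hp.edges_nodup
          rw [Walk.edges_cons] at this
          rw [heq]
          exact (List.nodup_cons.mp this).1
        have hyz : G'.Reachable y z := reach_of_avoid _ q hqe
        have hxy : ¬ (G'.Reachable a x ↔ G'.Reachable a y) := by
          rw [Sym2.eq_iff] at heq
          rcases heq with ⟨rfl, rfl⟩ | ⟨rfl, rfl⟩
          · exact fun h => hnr (h.mp (Reachable.refl a))
          · exact fun h => hnr (h.mpr (Reachable.refl a))
        intro hc
        exact hxy (hc.trans ⟨fun h => h.trans hyz.symm, fun h => h.trans hyz⟩)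
      · have hxy : G'.Reachable x y := by
          refine Adj.reachable ?_
          have hne : s(x,y) ≠ s(a,b) := fun h => by
            have := hp.edges_nodup
            rw [Walk.edges_cons, h] at this
            exact (List.nodup_cons.mp this).1 hmem
          rw [hG']
          simp only [sdiff_adj, fromEdgeSet_adj, Set.mem_singleton_iff]
          exact ⟨hadj, fun h => hne h.1⟩
        have := ih hq hmem
        intro hc
        exact this ((Iff.intro (fun h => h.trans hxy.symm) (fun h => h.trans hxy)).trans hc)
  · intro hc
    by_contra hmem
    exact hc ⟨fun h => h.trans (reach_of_avoid _ p hmem), fun h => h.trans (reach_of_avoid _ p hmem).symm⟩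

lemma xor_aux (p q r : Prop) : ¬(q ↔ r) ↔ ¬(¬(p ↔ r) ↔ ¬(p ↔ q)) := by tauto

lemma ite_sqrt_aux (P1 P2 P3 P4 P5 : Prop) [Decidable P1] [Decidable P2] [Decidable P3]
    [Decidable P4] [Decidable P5]
    (h4 : P4 ↔ ¬(P1 ↔ P2)) (h5 : P5 ↔ ¬(P3 ↔ P2)) (x : ℝ) (hx : 0 ≤ x) :
    ((if P1 then Real.sqrt x else 0) - (if P2 then Real.sqrt x else 0)) *
      ((if P3 then Real.sqrt x else 0) - (if P2 then Real.sqrt x else 0)) =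
      if P4 ∧ P5 then x else 0 := by
  by_cases h1 : P1 <;> by_cases h2 : P2 <;> by_cases h3 : P3 <;>
    simp [h1, h2, h3, h4, h5, Real.mul_self_sqrt hx]


open RealInnerProductSpace in
/-- the dot product `(Ψ v₁ - Ψ u) ⬝ (Ψ v₂ - Ψ u)` equals the total weight of
the edges common to the path from `u` to `v₁` and the path from `u` to `v₂` (i.e., the tree
distance from `u` to the median of `v₁, v₂, u`). -/
theorem sqrtEmbed_inner_eq_common_weight {V : Type*} [DecidableEq V] (G : SimpleGraph V)
    (hG : G.IsTree) [Fintype G.edgeSet] (w : Sym2 V → ℝ) (hw : ∀ e ∈ G.edgeSet, 0 < w e)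
    (v v₁ v₂ u : V) :
    ⟪sqrtEmbed G hG w v v₁ - sqrtEmbed G hG w v u,
      sqrtEmbed G hG w v v₂ - sqrtEmbed G hG w v u⟫ =
    ∑ e : G.edgeSet, if (e : Sym2 V) ∈ (treePath G hG u v₁).edges ∧
        (e : Sym2 V) ∈ (treePath G hG u v₂).edges then w e else 0 := by
  rw [PiLp.inner_apply]
  refine Finset.sum_congr rfl fun e _ => ?_
  obtain ⟨e, he⟩ := e
  induction e using Sym2.ind with
  | _ a b =>
    have hadj : G.Adj a b := (mem_edgeSet G).mp he
    have hA := hG.2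
    have hwpos := (hw _ he).le
    simp only [RCLike.inner_apply, conj_trivial, PiLp.sub_apply, sqrtEmbed, PiLp.toLp_apply, Subtype.coe_mk]
    have c1 := crossing hA hadj _ (treePath_isPath G hG v v₁)
    have c2 := crossing hA hadj _ (treePath_isPath G hG v u)
    have c3 := crossing hA hadj _ (treePath_isPath G hG v v₂)
    have c4 := crossing hA hadj _ (treePath_isPath G hG u v₁)
    have c5 := crossing hA hadj _ (treePath_isPath G hG u v₂)
    have h4 : (s(a,b) ∈ (treePath G hG u v₁).edges) ↔
        ¬((s(a,b) ∈ (treePath G hG v v₁).edges) ↔ (s(a,b) ∈ (treePath G hG v u).edges)) := by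
      rw [c4, c1, c2]; exact xor_aux _ _ _
    have h5 : (s(a,b) ∈ (treePath G hG u v₂).edges) ↔
        ¬((s(a,b) ∈ (treePath G hG v v₂).edges) ↔ (s(a,b) ∈ (treePath G hG v u).edges)) := by
      rw [c5, c3, c2]; exact xor_aux _ _ _
    rw [mul_comm]
    exact ite_sqrt_aux _ _ _ _ _ h4 h5 (w s(a,b)) hwpos
end
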